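/- Suppose every Borel image of X in ℕ → ℕ satisfies the ⟨≤,<⟩-excluded middle property. Then X satisfies U^{ℵ₀}_1(B_Γ, B_T): for every sequence (𝒰_n) of countable Borel covers of X, none containing a finite subcover, where each 𝒰_n is a γ-cover, there exist nonempty finite subsets F_n ⊆ 𝒰_n such that the family {⋃F_n : n ∈ ℕ} is a τ-cover of X. -/

import Mathlib

/-- `U` is a γ-cover of `X`. -/
def IsGammaCover (X : Set ℝ) (U : ℕ → Set ℝ) : Prop :=
  (∀ m, ¬ X ⊆ U m) ∧ X ⊆ ⋃ m, U m ∧ (Set.range U).Infinite ∧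
    ∀ x ∈ X, {m | x ∉ U m}.Finite

/-- `V` is a τ-cover of `X`. -/
def IsTauCover (X : Set ℝ) (V : ℕ → Set ℝ) : Prop :=
  (∀ n, ¬ X ⊆ V n) ∧ (∀ x ∈ X, {n | x ∈ V n}.Infinite) ∧
    ∀ x ∈ X, ∀ y ∈ X,
      {n | x ∈ V n ∧ y ∉ V n}.Finite ∨ {n | y ∈ V n ∧ x ∉ V n}.Finite

theorem stmt_7 (X : Set ℝ)
    (hEMP : ∀ Ψ : ℝ → ℕ → ℕ, Measurable Ψ →
      ∃ g : ℕ → ℕ,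
        (∀ f ∈ Ψ '' X, {n | f n ≤ g n}.Infinite) ∧
        (∀ f ∈ Ψ '' X, ∀ h ∈ Ψ '' X,
          {n | f n ≤ g n ∧ g n < h n}.Finite ∨
          {n | h n ≤ g n ∧ g n < f n}.Finite)) :
    ∀ U : ℕ → ℕ → Set ℝ, (∀ n m, MeasurableSet (U n m)) →
      (∀ n, IsGammaCover X (U n)) →
      (∀ n, ∀ F : Finset ℕ, ¬ X ⊆ ⋃ m ∈ F, U n m) →
      ∃ F : ℕ → Finset ℕ, (∀ n, (F n).Nonempty) ∧
        IsTauCover X (fun n => ⋃ m ∈ F n, U n m) := by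
  intro U hU hgamma hfin
  classical
  set Ψ : ℝ → ℕ → ℕ := fun x n => sInf {m | x ∈ U n m} with hΨdef
  have hmem : ∀ x ∈ X, ∀ n, {m | x ∈ U n m}.Nonempty := by
    intro x hx n
    have := (hgamma n).2.1 hx
    exact (by simpa [Set.mem_iUnion] using this : ∃ i, x ∈ U n i)
  have hiff : ∀ x ∈ X, ∀ n k, (x ∈ ⋃ m ∈ Finset.range (k + 1), U n m) ↔ Ψ x n ≤ k := by
    intro x hx n k
    simp only [Set.mem_iUnion, Finset.mem_range, exists_prop]
    constructor
    · rintro ⟨m, hm, hxm⟩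
      exact le_trans (Nat.sInf_le hxm) (Nat.lt_succ_iff.mp hm)
    · intro h
      exact ⟨Ψ x n, Nat.lt_succ_of_le h, Nat.sInf_mem (hmem x hx n)⟩
  have hmeas : Measurable Ψ := by
    apply measurable_pi_lambda
    intro n
    apply measurable_to_countable'
    intro k
    match k with
    | 0 =>
      have heq : (fun x => Ψ x n) ⁻¹' {0} = U n 0 ∪ ⋂ m, (U n m)ᶜ := by
        ext x
        simp only [Set.mem_preimage, Set.mem_singleton_iff, hΨdef, Set.mem_union,
          Set.mem_iInter, Set.mem_compl_iff]
        rw [Nat.sInf_eq_zero]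
        constructor
        · rintro (h | h)
          · exact Or.inl h
          · exact Or.inr fun m hm => (Set.eq_empty_iff_forall_notMem.mp h m) hm
        · rintro (h | h)
          · exact Or.inl h
          · exact Or.inr (Set.eq_empty_iff_forall_notMem.mpr h)
      rw [heq]
      exact (hU n 0).union (MeasurableSet.iInter fun m => (hU n m).compl)
    | k + 1 =>
      have heq : (fun x => Ψ x n) ⁻¹' {k + 1} =
          U n (k + 1) ∩ ⋂ j ∈ Finset.range (k + 1), (U n j)ᶜ := by
        ext x
        simp only [Set.mem_preimage, Set.mem_singleton_iff, hΨdef, Set.mem_inter_iff,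
          Set.mem_iInter, Set.mem_compl_iff, Finset.mem_range]
        constructor
        · intro h
          have hne : {m | x ∈ U n m}.Nonempty := by
            by_contra hempty
            rw [Set.not_nonempty_iff_eq_empty] at hempty
            rw [hempty, Nat.sInf_empty] at h
            exact Nat.succ_ne_zero k h.symm
          refine ⟨?_, ?_⟩
          · have := Nat.sInf_mem hne
            rwa [h] at this
          · intro j hj
            exact Nat.notMem_of_lt_sInf (h ▸ hj)
        · rintro ⟨hk, hlt⟩
          have h1 : sInf {m | x ∈ U n m} ≤ k + 1 := Nat.sInf_le hk
          have h2 : sInf {m | x ∈ U n m} ∈ {m | x ∈ U n m} := Nat.sInf_mem ⟨k + 1, hk⟩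
          rcases lt_or_eq_of_le h1 with h | h
          · exact absurd h2 (hlt _ h)
          · exact h
      rw [heq]
      exact (hU n (k + 1)).inter
        (MeasurableSet.biInter (Set.to_countable _) fun j _ => (hU n j).compl)
  obtain ⟨g, hg1, hg2⟩ := hEMP Ψ hmeas
  refine ⟨fun n => Finset.range (g n + 1), fun n => ⟨0, by simp⟩, ?_, ?_, ?_⟩
  · intro n
    exact hfin n (Finset.range (g n + 1))
  · intro x hx
    have hf := hg1 (Ψ x) ⟨x, hx, rfl⟩
    refine hf.mono ?_
    intro n hn
    exact (hiff x hx n (g n)).mpr hn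
  · intro x hx y hy
    have key : ∀ n, (x ∈ ⋃ m ∈ Finset.range (g n + 1), U n m ∧
        y ∉ ⋃ m ∈ Finset.range (g n + 1), U n m) ↔ (Ψ x n ≤ g n ∧ g n < Ψ y n) := by
      intro n
      rw [hiff x hx n (g n), hiff y hy n (g n), not_le]
    have key' : ∀ n, (y ∈ ⋃ m ∈ Finset.range (g n + 1), U n m ∧
        x ∉ ⋃ m ∈ Finset.range (g n + 1), U n m) ↔ (Ψ y n ≤ g n ∧ g n < Ψ x n) := by
      intro n
      rw [hiff x hx n (g n), hiff y hy n (g n), not_le]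
    rcases hg2 (Ψ x) ⟨x, hx, rfl⟩ (Ψ y) ⟨y, hy, rfl⟩ with h | h
    · left
      refine h.subset ?_
      intro n hn
      exact (key n).mp hn
    · right
      refine h.subset ?_
      intro n hn
      exact (key' n).mp hn
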